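/- For all 0 < k < 2, J > 0 and M > 0, the energy infimum satisfies I^k_{M,J} ≤ M; that is, for every ε > 0 there exists an admissible pair (f,φ) with 𝓔(f,φ) < M + ε. -/

import Mathlib

open MeasureTheory Real Filter Topology
open scoped ENNReal

noncomputable section

/-- Euclidean 3-space. -/
abbrev E3 := EuclideanSpace ℝ (Fin 3)

lemma exists_big_ball (C : ℝ) :
    ∃ R : ℝ, 0 < R ∧ C ≤ (volume (Metric.closedBall (0:E3) R)).toReal := by
  have hw0 : 0 < volume (Metric.ball (0:E3) 1) := Metric.measure_ball_pos _ _ one_pos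
  have hwt : volume (Metric.ball (0:E3) 1) < ⊤ :=
    lt_of_le_of_lt (measure_mono Metric.ball_subset_closedBall) measure_closedBall_lt_top
  set wr := (volume (Metric.ball (0:E3) 1)).toReal with hwrdef
  have hwr : 0 < wr := ENNReal.toReal_pos hw0.ne' hwt.ne
  refine ⟨max 1 (C/wr), lt_of_lt_of_le one_pos (le_max_left _ _), ?_⟩
  set R := max 1 (C/wr) with hRdef
  have hR1 : (1:ℝ) ≤ R := le_max_left _ _
  have hvol : volume (Metric.closedBall (0:E3) R)
      = ENNReal.ofReal (R ^ 3) * volume (Metric.ball (0:E3) 1) := by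
    have h := Measure.addHaar_closedBall (volume : Measure E3) 0 (by linarith : (0:ℝ) ≤ R)
    simpa using h
  rw [hvol, ENNReal.toReal_mul, ENNReal.toReal_ofReal (by positivity)]
  have h2 : C / wr ≤ R := le_max_right _ _
  have hR2 : (1:ℝ) ≤ R ^ 2 := one_le_pow₀ hR1
  have h3 : R ≤ R ^ 3 := by nlinarith
  have : C ≤ R * wr := by
    have := (div_le_iff₀ hwr).mp h2
    linarith
  nlinarith

/-- `φ` belongs to (a C¹ surrogate of) the space `D¹(ℝ³)`: it is continuously
differentiable, its gradient is square integrable and it vanishes at infinity in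
the sense that `{|φ| > a}` has finite measure for every `a > 0`. -/
def IsPotential (φ : E3 → ℝ) : Prop :=
  ContDiff ℝ 1 φ ∧ (∫⁻ x : E3, ENNReal.ofReal (‖gradient φ x‖ ^ 2)) < ⊤ ∧
    ∀ a : ℝ, 0 < a → volume {x : E3 | a < |φ x|} < ⊤

/-- `f ∈ Γ^k_{M,J}`: `f` is measurable, a.e. nonnegative, with `‖f‖_{L¹} = M` and
`‖f‖_{L^{1+1/k}} ≤ J` (in particular `f ∈ L¹ ∩ L^{1+1/k}`). -/
def InGamma (k M J : ℝ) (f : E3 → E3 → ℝ) : Prop :=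
  Measurable (Function.uncurry f) ∧
  (∀ᵐ z : E3 × E3, 0 ≤ f z.1 z.2) ∧
  (∫⁻ z : E3 × E3, ENNReal.ofReal (f z.1 z.2)) = ENNReal.ofReal M ∧
  eLpNorm (Function.uncurry f) (ENNReal.ofReal (1 + 1/k)) volume ≤ ENNReal.ofReal J

/-- Kinetic energy `E_kin(f,φ) = ∫∫ √(e^{2φ(x)}+|p|²) f(x,p) dp dx` (value in `[0,∞]`). -/
def kinE (f : E3 → E3 → ℝ) (φ : E3 → ℝ) : ℝ≥0∞ :=
  ∫⁻ z : E3 × E3, ENNReal.ofReal (Real.sqrt (Real.exp (2 * φ z.1) + ‖z.2‖ ^ 2) * f z.1 z.2)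

/-- Energy functional `𝓔(f,φ) = E_kin(f,φ) + (1/2)∫ |∇φ|²` (value in `[0,∞]`). -/
def energy (f : E3 → E3 → ℝ) (φ : E3 → ℝ) : ℝ≥0∞ :=
  kinE f φ + (∫⁻ x : E3, ENNReal.ofReal (‖gradient φ x‖ ^ 2)) / 2

/-- `(f,φ)` is admissible: `f ∈ Γ^k_{M,J}`, `φ` is a potential and
`∫∫ √(1+|p|²) f dp dx < ∞`. -/
def Admissible (k M J : ℝ) (f : E3 → E3 → ℝ) (φ : E3 → ℝ) : Prop :=
  InGamma k M J f ∧ IsPotential φ ∧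
  (∫⁻ z : E3 × E3, ENNReal.ofReal (Real.sqrt (1 + ‖z.2‖ ^ 2) * f z.1 z.2)) < ⊤

lemma main_construct (k M J ε : ℝ) (hk : 0 < k) (hM : 0 < M) (hJ : 0 < J) (hε : 0 < ε) :
    ∃ f φ, Admissible k M J f φ ∧ energy f φ < ENNReal.ofReal (M + ε) := by
  have hq1 : 1 < 1 + 1/k := by have := one_div_pos.mpr hk; linarith
  set q : ℝ := 1 + 1/k with hqdef
  have hq0 : 0 < q := by linarith
  set t : ℝ := 1 - 1/q with htdef
  have ht : 0 < t := by
    have : 1/q < 1 := by rw [div_lt_one hq0]; exact hq1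
    simp only [htdef]; linarith
  set δ : ℝ := Real.sqrt (ε / (2*M)) with hδdef
  have hδpos : 0 < δ := Real.sqrt_pos.mpr (by positivity)
  have hδsq : δ^2 = ε/(2*M) := Real.sq_sqrt (by positivity)
  set B := Metric.closedBall (0:E3) δ with hBdef
  have hvB0 : 0 < volume B := Metric.measure_closedBall_pos _ _ hδpos
  have hvBt : volume B < ⊤ := measure_closedBall_lt_top
  have hvBr : 0 < (volume B).toReal := ENNReal.toReal_pos hvB0.ne' hvBt.ne
  obtain ⟨R, hR, hRC⟩ := exists_big_ball ((M/J) ^ (1/t) / (volume B).toReal)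
  set A := Metric.closedBall (0:E3) R with hAdef
  have hvA0 : 0 < volume A := Metric.measure_closedBall_pos _ _ hR
  have hvAt : volume A < ⊤ := measure_closedBall_lt_top
  set Vr : ℝ := (volume A).toReal * (volume B).toReal with hVrdef
  have hVr0 : 0 < Vr := mul_pos (ENNReal.toReal_pos hvA0.ne' hvAt.ne) hvBr
  have hVrge : (M/J) ^ (1/t) ≤ Vr := by
    have h := (div_le_iff₀ hvBr).mp hRC
    calc (M/J) ^ (1/t) ≤ (volume A).toReal * (volume B).toReal := by
          rw [mul_comm] at h ⊢; exact h
      _ = Vr := rfl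
  set c : ℝ := M / Vr with hcdef
  have hc0 : 0 < c := div_pos hM hVr0
  set S := A ×ˢ B with hSdef
  have hSm : MeasurableSet S := measurableSet_closedBall.prod measurableSet_closedBall
  have hvolS : volume S = ENNReal.ofReal Vr := by
    have h1 : volume S = volume A * volume B := by
      rw [hSdef, Measure.volume_eq_prod, Measure.prod_prod]
    rw [h1, hVrdef, ENNReal.ofReal_mul ENNReal.toReal_nonneg,
      ENNReal.ofReal_toReal hvAt.ne, ENNReal.ofReal_toReal hvBt.ne]
  set f : E3 → E3 → ℝ := fun x p => S.indicator (fun _ => c) (x, p) with hfdef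
  have huncurry : Function.uncurry f = S.indicator (fun _ => c) := rfl
  have hmeas : Measurable (Function.uncurry f) := by
    rw [huncurry]; exact measurable_const.indicator hSm
  have hofReal : ∀ z : E3 × E3, ENNReal.ofReal (f z.1 z.2)
      = S.indicator (fun _ => ENNReal.ofReal c) z := by
    intro z
    have : f z.1 z.2 = S.indicator (fun _ => c) z := rfl
    rw [this]
    by_cases hz : z ∈ S
    · simp [Set.indicator_of_mem hz]
    · simp [Set.indicator_of_notMem hz]
  have hmass : (∫⁻ z : E3 × E3, ENNReal.ofReal (f z.1 z.2)) = ENNReal.ofReal M := by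
    simp_rw [hofReal]
    rw [lintegral_indicator_const hSm, hvolS, ← ENNReal.ofReal_mul hc0.le, hcdef,
      div_mul_cancel₀ _ hVr0.ne']
  have hLq : eLpNorm (Function.uncurry f) (ENNReal.ofReal q) volume ≤ ENNReal.ofReal J := by
    rw [huncurry, eLpNorm_indicator_const hSm (by simp [hq0]) ENNReal.ofReal_ne_top]
    rw [ENNReal.toReal_ofReal hq0.le, hvolS,
      ← Real.enorm_eq_ofReal hc0.le |>.symm, ENNReal.ofReal_rpow_of_pos hVr0,
      ← ENNReal.ofReal_mul hc0.le]
    apply ENNReal.ofReal_le_ofReal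
    have hVt : (0:ℝ) < Vr ^ t := Real.rpow_pos_of_pos hVr0 t
    have hJVt : M ≤ J * Vr ^ t := by
      have h1 : M/J ≤ Vr ^ t := by
        calc M/J = ((M/J)^(1/t))^t := by
              rw [← Real.rpow_mul (by positivity : (0:ℝ) ≤ M/J),
                one_div_mul_cancel ht.ne', Real.rpow_one]
          _ ≤ Vr ^ t := Real.rpow_le_rpow (by positivity) hVrge ht.le
      have := (div_le_iff₀ hJ).mp h1
      linarith [this]
    have hsum : Vr^(1/q) * Vr^t = Vr := by
      rw [← Real.rpow_add hVr0]
      have : 1/q + t = 1 := by simp only [htdef]; ring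
      rw [this, Real.rpow_one]
    have hkey : c * Vr^(1/q) * Vr^t = M := by
      rw [mul_assoc, hsum, hcdef, div_mul_cancel₀ _ hVr0.ne']
    rw [← mul_le_mul_iff_of_pos_right hVt, hkey]
    exact hJVt
  have hpt : ∀ z : E3 × E3, ENNReal.ofReal (Real.sqrt (1 + ‖z.2‖^2) * f z.1 z.2)
      ≤ ENNReal.ofReal (Real.sqrt (1 + δ^2)) * ENNReal.ofReal (f z.1 z.2) := by
    intro z
    by_cases hz : z ∈ S
    · have hp : ‖z.2‖ ≤ δ := by
        have h2 := hz.2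
        rwa [hBdef, Metric.mem_closedBall, dist_zero_right] at h2
      have hsq : Real.sqrt (1 + ‖z.2‖^2) ≤ Real.sqrt (1 + δ^2) :=
        Real.sqrt_le_sqrt (by nlinarith [norm_nonneg z.2])
      rw [ENNReal.ofReal_mul (Real.sqrt_nonneg _)]
      exact mul_le_mul_left (ENNReal.ofReal_le_ofReal hsq) _
    · have h0 : f z.1 z.2 = 0 := by
        have : f z.1 z.2 = S.indicator (fun _ => c) z := rfl
        rw [this, Set.indicator_of_notMem hz]
      simp [h0]
  have hkin_int : (∫⁻ z : E3 × E3, ENNReal.ofReal (Real.sqrt (1 + ‖z.2‖^2) * f z.1 z.2))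
      ≤ ENNReal.ofReal (M + ε/2) := by
    calc (∫⁻ z : E3 × E3, ENNReal.ofReal (Real.sqrt (1 + ‖z.2‖^2) * f z.1 z.2))
        ≤ ∫⁻ z : E3 × E3, ENNReal.ofReal (Real.sqrt (1+δ^2)) * ENNReal.ofReal (f z.1 z.2) :=
          lintegral_mono hpt
      _ = ENNReal.ofReal (Real.sqrt (1+δ^2)) * ENNReal.ofReal M := by
          rw [lintegral_const_mul' _ _ ENNReal.ofReal_ne_top, hmass]
      _ = ENNReal.ofReal (Real.sqrt (1+δ^2) * M) := (ENNReal.ofReal_mul (Real.sqrt_nonneg _)).symm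
      _ ≤ ENNReal.ofReal (M + ε/2) := by
          apply ENNReal.ofReal_le_ofReal
          have hs := Real.sqrt_nonneg (1+δ^2)
          have hs2 : (Real.sqrt (1+δ^2))^2 = 1+δ^2 := Real.sq_sqrt (by positivity)
          have hle : Real.sqrt (1+δ^2) ≤ 1 + δ^2 := by nlinarith
          have hδM : δ^2 * M = ε/2 := by rw [hδsq]; field_simp
          nlinarith
  have hkinE : kinE f (fun _ => (0:ℝ)) ≤ ENNReal.ofReal (M + ε/2) := by
    have heq : kinE f (fun _ => (0:ℝ))
        = ∫⁻ z : E3 × E3, ENNReal.ofReal (Real.sqrt (1 + ‖z.2‖^2) * f z.1 z.2) := by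
      unfold kinE
      simp only [mul_zero, Real.exp_zero]
    rw [heq]; exact hkin_int
  have hpot : IsPotential (fun _ : E3 => (0:ℝ)) := by
    refine ⟨contDiff_const, ?_, ?_⟩
    · simp [gradient_const]
    · intro a ha
      have : {x : E3 | a < |(0:ℝ)|} = ∅ := by
        ext x; simp [abs_zero, not_lt.mpr ha.le]
      rw [this]; simp
  have hgrad : (∫⁻ x : E3, ENNReal.ofReal (‖gradient (fun _ : E3 => (0:ℝ)) x‖^2)) = 0 := by
    simp [gradient_const]
  refine ⟨f, fun _ => 0, ⟨⟨hmeas, ?_, hmass, hLq⟩, hpot, ?_⟩, ?_⟩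
  · refine Filter.Eventually.of_forall fun z => ?_
    exact Set.indicator_nonneg (fun _ _ => hc0.le) _
  · exact lt_of_le_of_lt hkin_int ENNReal.ofReal_lt_top
  · unfold energy
    rw [hgrad]
    simp only [ENNReal.zero_div, add_zero]
    refine lt_of_le_of_lt hkinE (((ENNReal.ofReal_lt_ofReal_iff (by positivity)).mpr) ?_)
    linarith

/-- The energy infimum `I^k_{M,J} = inf {𝓔(f,φ) : (f,φ) admissible}`. -/
def energyInf (k M J : ℝ) : ℝ≥0∞ :=
  sInf { e : ℝ≥0∞ | ∃ f φ, Admissible k M J f φ ∧ e = energy f φ }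

/-- the energy infimum satisfies `I^k_{M,J} ≤ M`; that is, for every
`ε > 0` there is an admissible pair of energy `< M + ε`. -/
theorem energyInf_le_mass (k M J : ℝ) (hk : 0 < k) (hk2 : k < 2) (hM : 0 < M) (hJ : 0 < J) :
    energyInf k M J ≤ ENNReal.ofReal M ∧
    ∀ ε : ℝ, 0 < ε → ∃ f φ, Admissible k M J f φ ∧ energy f φ < ENNReal.ofReal (M + ε) := by
  have main : ∀ ε : ℝ, 0 < ε →
      ∃ f φ, Admissible k M J f φ ∧ energy f φ < ENNReal.ofReal (M + ε) :=
    fun ε hε => main_construct k M J ε hk hM hJ hε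
  refine ⟨?_, main⟩
  apply ENNReal.le_of_forall_pos_le_add
  intro ε hε _
  obtain ⟨f, φ, hadm, hlt⟩ := main ε (by exact_mod_cast hε)
  have h1 : energyInf k M J ≤ energy f φ := sInf_le ⟨f, φ, hadm, rfl⟩
  calc energyInf k M J ≤ energy f φ := h1
    _ ≤ ENNReal.ofReal (M + ε) := hlt.le
    _ = ENNReal.ofReal M + ENNReal.ofReal ε := ENNReal.ofReal_add hM.le ε.coe_nonneg
    _ = ENNReal.ofReal M + ε := by rw [ENNReal.ofReal_coe_nnreal]
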